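/- Let d ≥ 1 and let G be a locally finite simple graph on a vertex set V that is bipartite and d-regular. Then there exist d perfect matchings M₁, …, M_d of G that are pairwise orthogonal and whose union is the entire edge set of G. -/

import Mathlib

open Set Function

/-- Schröder–Bernstein along a relation. -/
theorem rel_schroeder_bernstein {α : Type*} {β : Type*} (r : α → β → Prop)
    {f : α → β} {g : β → α} (hf : Function.Injective f) (hg : Function.Injective g)
    (hrf : ∀ a, r a (f a)) (hrg : ∀ b, r (g b) b) :
    ∃ e : α ≃ β, ∀ a, r a (e a) := by
  classical
  cases' isEmpty_or_nonempty β with hβ hβ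
  · have : IsEmpty α := Function.isEmpty f
    exact ⟨(Equiv.equivEmpty α).trans (Equiv.equivEmpty β).symm, fun a => (IsEmpty.false a).elim⟩
  set F : Set α →o Set α :=
    { toFun := fun s => (g '' (f '' s)ᶜ)ᶜ
      monotone' := fun s t hst =>
        compl_subset_compl.mpr <| image_mono <| compl_subset_compl.mpr <| image_mono hst }
  set s : Set α := F.lfp
  have hs : (g '' (f '' s)ᶜ)ᶜ = s := F.map_lfp
  have hns : g '' (f '' s)ᶜ = sᶜ := compl_injective (by simp [hs])
  set g' := invFun g
  have g'g : LeftInverse g' g := leftInverse_invFun hg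
  have hg'ns : g' '' sᶜ = (f '' s)ᶜ := by rw [← hns, g'g.image_image]
  set h : α → β := s.piecewise f g'
  have hsurj : Surjective h := by rw [← range_eq_univ, range_piecewise, hg'ns, union_compl_self]
  have hinj : Injective h := by
    refine (injective_piecewise_iff _).2 ⟨hf.injOn, ?_, ?_⟩
    · intro x hx y hy hxy
      obtain ⟨x', _, rfl⟩ : x ∈ g '' (f '' s)ᶜ := by rwa [hns]
      obtain ⟨y', _, rfl⟩ : y ∈ g '' (f '' s)ᶜ := by rwa [hns]
      rw [g'g _, g'g _] at hxy
      rw [hxy]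
    · intro x hx y hy hxy
      obtain ⟨y', hy', rfl⟩ : y ∈ g '' (f '' s)ᶜ := by rwa [hns]
      rw [g'g _] at hxy
      exact hy' ⟨x, hx, hxy⟩
  refine ⟨Equiv.ofBijective h ⟨hinj, hsurj⟩, fun a => ?_⟩
  show r a (s.piecewise f g' a)
  by_cases has : a ∈ s
  · rw [Set.piecewise_eq_of_mem _ _ _ has]; exact hrf a
  · rw [Set.piecewise_eq_of_notMem _ _ _ has]
    obtain ⟨b, _, rfl⟩ : a ∈ g '' (f '' s)ᶜ := by rwa [hns]
    rw [g'g b]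
    exact hrg b

open SimpleGraph in
lemma exists_inj_adj {V : Type*} (G : SimpleGraph V) [G.LocallyFinite] {d : ℕ} (hd : 1 ≤ d)
    (hreg : G.IsRegularOfDegree d) (A B : Set V)
    (hAB : ∀ v ∈ A, ∀ w, G.Adj v w → w ∈ B) :
    ∃ f : A → B, Injective f ∧ ∀ a : A, G.Adj a (f a) := by
  classical
  set t : A → Finset B := fun a => (G.neighborFinset a.1).subtype (· ∈ B) with ht
  have hmem : ∀ (a : A) (b : B), b ∈ t a ↔ G.Adj a.1 b.1 := by
    intro a b
    simp [ht, Finset.mem_subtype]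
  have hcard : ∀ a : A, (t a).card = d := by
    intro a
    rw [ht]
    rw [Finset.card_subtype]
    rw [Finset.filter_true_of_mem (fun x hx => by
      exact hAB a.1 a.2 x ((G.mem_neighborFinset _ _).1 hx))]
    exact hreg a.1
  have hall : ∀ s : Finset A, s.card ≤ (s.biUnion t).card := by
    intro s
    set T := s.biUnion t with hT
    set r : A → B → Prop := fun a b => G.Adj a.1 b.1 with hr
    have key : s.card * d ≤ T.card * d := by
      refine Finset.card_mul_le_card_mul r ?_ ?_
      · intro a ha
        have hsub : t a ⊆ T.bipartiteAbove r a := by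
          intro b hb
          rw [Finset.mem_bipartiteAbove]
          exact ⟨Finset.mem_biUnion.2 ⟨a, ha, hb⟩, (hmem a b).1 hb⟩
        calc d = (t a).card := (hcard a).symm
        _ ≤ _ := Finset.card_le_card hsub
      · intro b _
        have : (s.bipartiteBelow r b).card ≤ (G.neighborFinset b.1).card := by
          refine Finset.card_le_card_of_injOn (fun a => a.1) ?_ ?_
          · intro a ha
            rw [Finset.mem_coe, Finset.mem_bipartiteBelow] at ha
            exact (G.mem_neighborFinset _ _).2 ha.2.symm
          · intro x _ y _ hxy
            exact Subtype.ext hxy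
        simpa [hreg b.1] using this
    exact Nat.le_of_mul_le_mul_right key hd
  obtain ⟨f, hf, hft⟩ := (Finset.all_card_le_biUnion_card_iff_exists_injective t).1 hall
  exact ⟨f, hf, fun a => (hmem a (f a)).1 (hft a)⟩

open SimpleGraph in
lemma exists_pm {V : Type*} (G : SimpleGraph V) [G.LocallyFinite] {d : ℕ} (hd : 1 ≤ d)
    (hbip : G.Colorable 2) (hreg : G.IsRegularOfDegree d) :
    ∃ M : G.Subgraph, M.IsPerfectMatching := by
  classical
  obtain ⟨C⟩ := hbip
  set A : Set V := {v | C v = 0} with hA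
  set B : Set V := {v | C v = 1} with hB
  have htwo : ∀ x : Fin 2, x ≠ 0 → x = 1 := by decide
  have hAB : ∀ v ∈ A, ∀ w, G.Adj v w → w ∈ B := by
    intro v hv w hadj
    have hne := C.valid hadj
    have hv' : C v = 0 := hv
    exact htwo _ (fun h => hne (hv'.trans h.symm))
  have hBA : ∀ v ∈ B, ∀ w, G.Adj v w → w ∈ A := by
    intro v hv w hadj
    have hne := C.valid hadj
    have hv' : C v = 1 := hv
    by_contra hw
    exact hne (hv'.trans (htwo _ hw).symm)
  obtain ⟨f, hfinj, hfadj⟩ := exists_inj_adj G hd hreg A B hAB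
  obtain ⟨g, hginj, hgadj⟩ := exists_inj_adj G hd hreg B A hBA
  obtain ⟨e, he⟩ := rel_schroeder_bernstein (fun (a : A) (b : B) => G.Adj a.1 b.1)
    hfinj hginj hfadj (fun b => (hgadj b).symm)
  have hdisj : Disjoint A B := by
    rw [Set.disjoint_left]
    intro v hv hv'
    have h0 : C v = 0 := hv
    have h1 : C v = 1 := hv'
    exact absurd (h0.symm.trans h1) (by decide)
  obtain ⟨M, hverts, hmatch⟩ :=
    SimpleGraph.Subgraph.IsMatching.exists_of_disjoint_sets_of_equiv hdisj e he
  refine ⟨M, hmatch, fun v => ?_⟩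
  rw [hverts]
  rcases eq_or_ne (C v) 0 with h | h
  · exact Or.inl h
  · exact Or.inr (htwo _ h)

open SimpleGraph in
lemma edgeSet_map_ofLE {V : Type*} {G G' : SimpleGraph V} (h : G' ≤ G) (H : G'.Subgraph) :
    (H.map (Hom.ofLE h)).edgeSet = H.edgeSet := by
  ext e
  refine Sym2.ind (fun x y => ?_) e
  rw [Subgraph.mem_edgeSet, Subgraph.mem_edgeSet, Subgraph.map_adj]
  constructor
  · rintro ⟨a, b, hab, ha, hb⟩
    simpa [← ha, ← hb] using hab
  · intro hxy
    exact ⟨x, y, hxy, rfl, rfl⟩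

open SimpleGraph in
lemma decomp {V : Type*} (d : ℕ) (G : SimpleGraph V) (inst : G.LocallyFinite)
    (hbip : G.Colorable 2) (hreg : G.IsRegularOfDegree d) :
    ∃ M : Fin d → G.Subgraph,
      (∀ i, (M i).IsPerfectMatching) ∧
      (∀ i j, i ≠ j → Disjoint (M i).edgeSet (M j).edgeSet) ∧
      (⋃ i, (M i).edgeSet) = G.edgeSet := by
  classical
  induction d generalizing G with
  | zero =>
    refine ⟨Fin.elim0, fun i => i.elim0, fun i => i.elim0, ?_⟩
    rw [Set.iUnion_of_empty]
    symm
    rw [Set.eq_empty_iff_forall_notMem]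
    intro e
    refine Sym2.ind (fun x y hxy => ?_) e
    rw [SimpleGraph.mem_edgeSet] at hxy
    have : y ∈ G.neighborFinset x := (G.mem_neighborFinset _ _).2 hxy
    simpa [Finset.card_eq_zero.1 (hreg x)] using this
  | succ d ih =>
    obtain ⟨M₀, hM₀⟩ := exists_pm G (Nat.succ_le_succ (Nat.zero_le d)) hbip hreg
    set G' := G.deleteEdges M₀.edgeSet with hG'
    have hle : G' ≤ G := G.deleteEdges_le _
    haveI instG' : G'.LocallyFinite := fun v =>
      Set.Finite.fintype ((G.neighborSet v).toFinite.subset (fun w hw => hw.1))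
    have hbip' : G'.Colorable 2 := hbip.mono_left hle
    have hreg' : G'.IsRegularOfDegree d := by
      intro v
      obtain ⟨w, hw, hwu⟩ := hM₀.1 (hM₀.2 v)
      have hnf : G'.neighborFinset v = (G.neighborFinset v).erase w := by
        ext u
        rw [mem_neighborFinset, Finset.mem_erase, mem_neighborFinset]
        constructor
        · intro hu
          rw [hG', deleteEdges_adj] at hu
          refine ⟨fun huw => hu.2 ?_, hu.1⟩
          rw [Subgraph.mem_edgeSet, huw]
          exact hw
        · intro ⟨huw, hu⟩
          rw [hG', deleteEdges_adj]
          refine ⟨hu, fun hmem => huw ?_⟩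
          exact hwu u (Subgraph.mem_edgeSet.1 hmem)
      have : G'.degree v = ((G.neighborFinset v).erase w).card := by
        rw [SimpleGraph.degree, hnf]
      have hdeg : (G.neighborFinset v).card = d + 1 := hreg v
      rw [this, Finset.card_erase_of_mem ((G.mem_neighborFinset _ _).2 (M₀.adj_sub hw)), hdeg]
      omega
    obtain ⟨M', hpm', hdisj', hun'⟩ := ih G' instG' hbip' hreg'
    set N : Fin d → G.Subgraph := fun i => (M' i).map (Hom.ofLE hle) with hN
    have hNedge : ∀ i, (N i).edgeSet = (M' i).edgeSet := fun i => edgeSet_map_ofLE hle _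
    have hNpm : ∀ i, (N i).IsPerfectMatching := by
      intro i
      refine ⟨(hpm' i).1.map_ofLE hle, ?_⟩
      intro v
      have : (N i).verts = (Hom.ofLE hle) '' (M' i).verts := rfl
      rw [this, Hom.coe_ofLE, Set.image_id]
      exact (hpm' i).2 v
    have hNsub : ∀ i, (N i).edgeSet ⊆ G.edgeSet \ M₀.edgeSet := by
      intro i
      rw [hNedge i]
      refine ((M' i).edgeSet_subset).trans ?_
      rw [hG', edgeSet_deleteEdges]
    refine ⟨Fin.cons M₀ N, ?_, ?_, ?_⟩
    · intro i
      refine Fin.cases ?_ ?_ i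
      · simpa using hM₀
      · intro j; simpa using hNpm j
    · intro i j hij
      induction i using Fin.cases with
      | zero =>
        induction j using Fin.cases with
        | zero => exact absurd rfl hij
        | succ j' =>
          simp only [Fin.cons_zero, Fin.cons_succ]
          exact (Set.disjoint_sdiff_left.mono_left (hNsub j')).symm
      | succ i' =>
        induction j using Fin.cases with
        | zero =>
          simp only [Fin.cons_zero, Fin.cons_succ]
          exact Set.disjoint_sdiff_left.mono_left (hNsub i')
        | succ j' =>
          simp only [Fin.cons_succ]
          rw [hNedge, hNedge]
          exact hdisj' i' j' (fun h => hij (congrArg Fin.succ h))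
    · ext e
      simp only [Set.mem_iUnion, Fin.exists_fin_succ, Fin.cons_zero, Fin.cons_succ]
      constructor
      · rintro (h | ⟨i, hi⟩)
        · exact M₀.edgeSet_subset h
        · exact ((hNsub i) hi).1
      · intro he
        by_cases hm : e ∈ M₀.edgeSet
        · exact Or.inl hm
        · refine Or.inr ?_
          have : e ∈ ⋃ i, (M' i).edgeSet := by
            rw [hun', hG', edgeSet_deleteEdges]
            exact ⟨he, hm⟩
          obtain ⟨i, hi⟩ := Set.mem_iUnion.1 this
          exact ⟨i, (hNedge i).symm ▸ hi⟩

/-- A locally finite bipartite `d`-regular simple graph (`d ≥ 1`) has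
`d` pairwise orthogonal (edge-disjoint) perfect matchings whose union is the whole edge set. -/
theorem bipartite_regular_edge_decomposition_into_matchings {V : Type*} (G : SimpleGraph V)
    [G.LocallyFinite] (d : ℕ) (hd : 1 ≤ d) (hbip : G.Colorable 2)
    (hreg : G.IsRegularOfDegree d) :
    ∃ M : Fin d → G.Subgraph,
      (∀ i, (M i).IsPerfectMatching) ∧
      (∀ i j, i ≠ j → Disjoint (M i).edgeSet (M j).edgeSet) ∧
      (⋃ i, (M i).edgeSet) = G.edgeSet := by
  exact decomp d G ‹_› hbip hreg
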